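/- Let J = {k_1, ..., k_s} ⊆ {0,...,M̃-1} with |J| = s ≥ 1 and M̃ ≥ s. Let q be such that P_{q-1} < s ≤ P_q (where P_q denotes the q-th prime and P_0 := 1), and let K = max(1, 2(s-1)⌈log_{P_q}(M̃) - 1⌉). Then there exist L ≤ log₂(s) + 1 primes P̃_0, ..., P̃_{L-1}, all among the K smallest primes that are at least P_q, such that every element k of J satisfies, for at least one index ℓ, k ≢ h (mod P̃_ℓ) for all h ∈ J \ {k}. -/

import Mathlib

/-- The `q`-th prime number (`P 1 = 2`, `P 2 = 3`, ...), with the convention `P 0 = 1`. -/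
noncomputable def nthPrime (q : ℕ) : ℕ := if q = 0 then 1 else Nat.nth Nat.Prime (q - 1)

lemma nthPrime_prime {j : ℕ} (hj : 1 ≤ j) : (nthPrime j).Prime := by
  unfold nthPrime; rw [if_neg (by omega)]; exact Nat.prime_nth_prime _

lemma nthPrime_mono {i j : ℕ} (hi : 1 ≤ i) (hij : i ≤ j) : nthPrime i ≤ nthPrime j := by
  unfold nthPrime; rw [if_neg (by omega), if_neg (by omega)]
  exact Nat.nth_monotone Nat.infinite_setOf_prime (by omega)

lemma nthPrime_injOn {i j : ℕ} (hi : 1 ≤ i) (hj : 1 ≤ j) (h : nthPrime i = nthPrime j) :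
    i = j := by
  unfold nthPrime at h; rw [if_neg (by omega), if_neg (by omega)] at h
  have := Nat.nth_injective Nat.infinite_setOf_prime h
  omega

lemma modeq_iff_dvd_dist {k h n : ℕ} : k ≡ h [MOD n] ↔ n ∣ (max k h - min k h) := by
  rcases le_total k h with hle | hle
  · rw [max_eq_right hle, min_eq_left hle]
    exact Nat.modEq_iff_dvd' hle
  · rw [max_eq_left hle, min_eq_right hle]
    exact ⟨fun H => (Nat.modEq_iff_dvd' hle).mp H.symm,
      fun H => ((Nat.modEq_iff_dvd' hle).mpr H).symm⟩

lemma card_dvd_le (q K Mt d : ℕ) (hq : 1 ≤ q) (hP : 2 ≤ nthPrime q)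
    (hd : 0 < d) (hdM : d < Mt) :
    ((Finset.Ico q (q + K)).filter (fun j => nthPrime j ∣ d)).card
      ≤ (⌈Real.logb (nthPrime q) (Mt : ℝ) - 1⌉).toNat := by
  set T := (Finset.Ico q (q + K)).filter (fun j => nthPrime j ∣ d) with hT
  have hmem : ∀ j ∈ T, 1 ≤ j ∧ q ≤ j ∧ nthPrime j ∣ d := by
    intro j hj
    simp only [hT, Finset.mem_filter, Finset.mem_Ico] at hj
    exact ⟨by omega, hj.1.1, hj.2⟩
  set I := T.image nthPrime with hI
  have hcard : I.card = T.card :=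
    Finset.card_image_of_injOn (fun a ha b hb hab =>
      nthPrime_injOn (hmem a ha).1 (hmem b hb).1 hab)
  have hprime : ∀ p ∈ I, Prime p := by
    intro p hp
    obtain ⟨j, hj, rfl⟩ := Finset.mem_image.mp hp
    exact (nthPrime_prime (hmem j hj).1).prime
  have hdvd : ∀ p ∈ I, p ∣ d := by
    intro p hp
    obtain ⟨j, hj, rfl⟩ := Finset.mem_image.mp hp
    exact (hmem j hj).2.2
  have hprod : (∏ p ∈ I, p) ∣ d := Finset.prod_primes_dvd d hprime hdvd
  have h1 : (nthPrime q) ^ I.card ≤ ∏ p ∈ I, p := by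
    apply Finset.pow_card_le_prod
    intro p hp
    obtain ⟨j, hj, rfl⟩ := Finset.mem_image.mp hp
    exact nthPrime_mono hq (hmem j hj).2.1
  have h2 : (∏ p ∈ I, p) ≤ d := Nat.le_of_dvd hd hprod
  have h3 : (nthPrime q) ^ T.card < Mt := by rw [← hcard]; omega
  have hb : (1 : ℝ) < (nthPrime q : ℝ) := by exact_mod_cast hP.trans_lt' one_lt_two
  have h4 : (T.card : ℝ) < Real.logb (nthPrime q) Mt := by
    rw [Real.lt_logb_iff_rpow_lt hb (by exact_mod_cast (by omega : 0 < Mt)), Real.rpow_natCast]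
    exact_mod_cast h3
  have h5 : (T.card : ℤ) - 1 < ⌈Real.logb (nthPrime q) (Mt : ℝ) - 1⌉ := by
    rw [Int.lt_ceil]; push_cast; linarith
  omega

lemma halving (Mt s q K : ℕ) (J B : Finset ℕ) (hJ : J ⊆ Finset.range Mt)
    (hcard : J.card = s) (hB : B ⊆ J) (hq : 1 ≤ q) (hs : 2 ≤ s) (hsP : s ≤ nthPrime q)
    (hMt : nthPrime q < Mt)
    (hK : K = 2 * (s - 1) * (⌈Real.logb (nthPrime q) (Mt : ℝ) - 1⌉).toNat) :
    ∃ j ∈ Finset.Ico q (q + K),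
      2 * (B.filter (fun k => ∃ h ∈ J, h ≠ k ∧ k ≡ h [MOD nthPrime j])).card ≤ B.card := by
  set D := (⌈Real.logb (nthPrime q) (Mt : ℝ) - 1⌉).toNat with hD
  have hP2 : 2 ≤ nthPrime q := hs.trans hsP
  have hb : (1 : ℝ) < (nthPrime q : ℝ) := by exact_mod_cast hP2.trans_lt' one_lt_two
  have hD1 : 1 ≤ D := by
    have hlog : (1 : ℝ) < Real.logb (nthPrime q) Mt := by
      have h := Real.logb_lt_logb (b := (nthPrime q : ℝ)) hb
        (x := (nthPrime q : ℝ)) (y := (Mt : ℝ)) (by positivity) (by exact_mod_cast hMt)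
      rwa [Real.logb_self_eq_one hb] at h
    have : (0 : ℤ) < ⌈Real.logb (nthPrime q) (Mt : ℝ) - 1⌉ := by
      rw [Int.lt_ceil]; push_cast; linarith
    omega
  have hKpos : 1 ≤ K := by
    have h1 : 1 ≤ s - 1 := by omega
    calc 1 ≤ 2 * (s - 1) * D := by nlinarith
      _ = K := hK.symm
  set S := Finset.Ico q (q + K) with hS
  have key : ∑ j ∈ S, (B.filter (fun k => ∃ h ∈ J, h ≠ k ∧ k ≡ h [MOD nthPrime j])).card
      ≤ B.card * ((s - 1) * D) := by
    have swap : ∑ j ∈ S, (B.filter (fun k => ∃ h ∈ J, h ≠ k ∧ k ≡ h [MOD nthPrime j])).card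
        = ∑ k ∈ B, (S.filter (fun j => ∃ h ∈ J, h ≠ k ∧ k ≡ h [MOD nthPrime j])).card := by
      simp only [Finset.card_filter]
      rw [Finset.sum_comm]
    rw [swap]
    have inner : ∀ k ∈ B, (S.filter (fun j => ∃ h ∈ J, h ≠ k ∧ k ≡ h [MOD nthPrime j])).card
        ≤ (s - 1) * D := by
      intro k hk
      have hkJ := hB hk
      have hkM : k < Mt := Finset.mem_range.mp (hJ hkJ)
      have hsub : S.filter (fun j => ∃ h ∈ J, h ≠ k ∧ k ≡ h [MOD nthPrime j])
          ⊆ (J.erase k).biUnion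
            (fun h => S.filter (fun j => nthPrime j ∣ (max k h - min k h))) := by
        intro j hj
        rw [Finset.mem_filter] at hj
        obtain ⟨hjS, h, hhJ, hne, hmod⟩ := hj
        refine Finset.mem_biUnion.mpr ⟨h, Finset.mem_erase.mpr ⟨hne, hhJ⟩, ?_⟩
        exact Finset.mem_filter.mpr ⟨hjS, modeq_iff_dvd_dist.mp hmod⟩
      have hbound : ∀ h ∈ J.erase k,
          (S.filter (fun j => nthPrime j ∣ (max k h - min k h))).card ≤ D := by
        intro h hh
        rw [Finset.mem_erase] at hh
        have hhM : h < Mt := Finset.mem_range.mp (hJ hh.2)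
        have hhk : h ≠ k := hh.1
        exact card_dvd_le q K Mt _ hq hP2 (by omega) (by omega)
      calc (S.filter (fun j => ∃ h ∈ J, h ≠ k ∧ k ≡ h [MOD nthPrime j])).card
          ≤ ((J.erase k).biUnion
              (fun h => S.filter (fun j => nthPrime j ∣ (max k h - min k h)))).card :=
            Finset.card_le_card hsub
        _ ≤ ∑ h ∈ J.erase k, (S.filter (fun j => nthPrime j ∣ (max k h - min k h))).card :=
            Finset.card_biUnion_le
        _ ≤ ∑ _h ∈ J.erase k, D := Finset.sum_le_sum hbound
        _ = (s - 1) * D := by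
            rw [Finset.sum_const, Finset.card_erase_of_mem hkJ, hcard, smul_eq_mul]
    calc ∑ k ∈ B, (S.filter (fun j => ∃ h ∈ J, h ≠ k ∧ k ≡ h [MOD nthPrime j])).card
        ≤ ∑ _k ∈ B, (s - 1) * D := Finset.sum_le_sum inner
      _ = B.card * ((s - 1) * D) := by rw [Finset.sum_const, smul_eq_mul]
  by_contra hcon
  push_neg at hcon
  have hall : ∀ j ∈ S, B.card + 1 ≤
      2 * (B.filter (fun k => ∃ h ∈ J, h ≠ k ∧ k ≡ h [MOD nthPrime j])).card := by
    intro j hj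
    have := hcon j (by simpa [hS] using hj)
    omega
  have hSc : S.card = K := by simp [hS]
  have hfin : K * (B.card + 1) ≤ 2 * (B.card * ((s - 1) * D)) := by
    calc K * (B.card + 1) = ∑ _j ∈ S, (B.card + 1) := by
          rw [Finset.sum_const, hSc, smul_eq_mul]
      _ ≤ ∑ j ∈ S, 2 * (B.filter (fun k => ∃ h ∈ J, h ≠ k ∧ k ≡ h [MOD nthPrime j])).card :=
          Finset.sum_le_sum hall
      _ = 2 * ∑ j ∈ S, (B.filter (fun k => ∃ h ∈ J, h ≠ k ∧ k ≡ h [MOD nthPrime j])).card := by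
          rw [Finset.mul_sum]
      _ ≤ 2 * (B.card * ((s - 1) * D)) := by omega
  have hKeq : K = 2 * ((s - 1) * D) := by rw [hK]; ring
  nlinarith [hKpos, hfin, hKeq]

lemma cover (Mt s q K : ℕ) (J : Finset ℕ) (hJ : J ⊆ Finset.range Mt)
    (hcard : J.card = s) (hq : 1 ≤ q) (hs : 2 ≤ s) (hsP : s ≤ nthPrime q)
    (hMt : nthPrime q < Mt)
    (hK : K = 2 * (s - 1) * (⌈Real.logb (nthPrime q) (Mt : ℝ) - 1⌉).toNat) :
    ∀ n (B : Finset ℕ), B ⊆ J → B.card < 2 ^ n →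
      ∃ ps : List ℕ, ps.length ≤ n ∧
        (∀ p ∈ ps, ∃ j ∈ Finset.Ico q (q + K), p = nthPrime j) ∧
        ∀ k ∈ B, ∃ p ∈ ps, ∀ h ∈ J, h ≠ k → ¬ k ≡ h [MOD p] := by
  intro n
  induction n with
  | zero =>
    intro B hB hc
    have hB0 : B = ∅ := Finset.card_eq_zero.mp (by simpa using hc)
    exact ⟨[], by simp, by simp, by simp [hB0]⟩
  | succ n ih =>
    intro B hB hc
    obtain ⟨j, hjS, hj⟩ := halving Mt s q K J B hJ hcard hB hq hs hsP hMt hK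
    set B' := B.filter (fun k => ∃ h ∈ J, h ≠ k ∧ k ≡ h [MOD nthPrime j]) with hB'def
    have hB'sub : B' ⊆ J := (Finset.filter_subset _ _).trans hB
    have hc' : B'.card < 2 ^ n := by
      have h2 : 2 ^ (n + 1) = 2 * 2 ^ n := by ring
      omega
    obtain ⟨ps, hlen, hmem, hcov⟩ := ih B' hB'sub hc'
    refine ⟨nthPrime j :: ps, by simpa using hlen, ?_, ?_⟩
    · intro p hp
      rcases List.mem_cons.mp hp with rfl | hp'
      · exact ⟨j, hjS, rfl⟩
      · exact hmem p hp'
    · intro k hk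
      by_cases hkb : k ∈ B'
      · obtain ⟨p, hp, h⟩ := hcov k hkb
        exact ⟨p, List.mem_cons_of_mem _ hp, h⟩
      · refine ⟨nthPrime j, List.mem_cons_self, ?_⟩
        intro h hh hne heq
        exact hkb (Finset.mem_filter.mpr ⟨hk, ⟨h, hh, hne, heq⟩⟩)

theorem stmt_2 (Mt s q : ℕ) (J : Finset ℕ) (hJ : J ⊆ Finset.range Mt)
    (hcard : J.card = s) (hs : 1 ≤ s) (hsM : s ≤ Mt)
    (hq1 : nthPrime (q - 1) < s) (hq2 : s ≤ nthPrime q)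
    (K : ℕ)
    (hK : K = max 1 (2 * (s - 1) *
      (⌈Real.logb (nthPrime q) (Mt : ℝ) - 1⌉).toNat)) :
    ∃ (L : ℕ) (Pt : Fin L → ℕ),
      (L : ℝ) ≤ Real.logb 2 (s : ℝ) + 1 ∧
      (∀ ℓ : Fin L, ∃ j ∈ Finset.Ico q (q + K), Pt ℓ = nthPrime j) ∧
      (∀ k ∈ J, ∃ ℓ : Fin L, ∀ h ∈ J, h ≠ k → ¬ (k ≡ h [MOD Pt ℓ])) := by
  have hK1 : 1 ≤ K := by rw [hK]; exact le_max_left _ _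
  have hlogb0 : (0 : ℝ) ≤ Real.logb 2 (s : ℝ) :=
    Real.logb_nonneg one_lt_two (by exact_mod_cast hs)
  have hqmem : q ∈ Finset.Ico q (q + K) := by simp; omega
  by_cases hs2 : s ≤ 1
  · -- trivial case s = 1
    refine ⟨1, fun _ => nthPrime q, by simpa using by linarith, fun _ => ⟨q, hqmem, rfl⟩, ?_⟩
    intro k hk
    refine ⟨0, fun h hh hne heq => hne ?_⟩
    have : J.card ≤ 1 := hcard ▸ hs2
    exact Finset.card_le_one.mp this h hh k hk
  · push_neg at hs2
    have hq : 1 ≤ q := by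
      by_contra hq0
      have : q = 0 := by omega
      simp [this, nthPrime] at hq2
      omega
    have hP2 : 2 ≤ nthPrime q := by omega
    by_cases hMt : Mt ≤ nthPrime q
    · -- single prime suffices: all elements of J are < nthPrime q
      refine ⟨1, fun _ => nthPrime q, by simpa using by linarith,
        fun _ => ⟨q, hqmem, rfl⟩, ?_⟩
      intro k hk
      refine ⟨0, fun h hh hne heq => hne ?_⟩
      have hkM : k < Mt := Finset.mem_range.mp (hJ hk)
      have hhM : h < Mt := Finset.mem_range.mp (hJ hh)
      have h1 : k % nthPrime q = h % nthPrime q := heq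
      rw [Nat.mod_eq_of_lt (by omega), Nat.mod_eq_of_lt (by omega)] at h1
      exact h1.symm
    · push_neg at hMt
      -- main case
      have hD1 : 1 ≤ (⌈Real.logb (nthPrime q) (Mt : ℝ) - 1⌉).toNat := by
        have hb : (1 : ℝ) < (nthPrime q : ℝ) := by exact_mod_cast hP2.trans_lt' one_lt_two
        have hlog : (1 : ℝ) < Real.logb (nthPrime q) Mt := by
          have h := Real.logb_lt_logb (b := (nthPrime q : ℝ)) hb
            (x := (nthPrime q : ℝ)) (y := (Mt : ℝ)) (by positivity) (by exact_mod_cast hMt)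
          rwa [Real.logb_self_eq_one hb] at h
        have : (0 : ℤ) < ⌈Real.logb (nthPrime q) (Mt : ℝ) - 1⌉ := by
          rw [Int.lt_ceil]; push_cast; linarith
        omega
      have hKeq : K = 2 * (s - 1) * (⌈Real.logb (nthPrime q) (Mt : ℝ) - 1⌉).toNat := by
        rw [hK, max_eq_right]
        have h1 : 1 ≤ s - 1 := by omega
        nlinarith
      have hsc : J.card < 2 ^ (Nat.log 2 s + 1) := by
        rw [hcard]
        exact Nat.lt_pow_succ_log_self one_lt_two s
      obtain ⟨ps, hlen, hmem, hcov⟩ := cover Mt s q K J hJ hcard hq hs2 hq2 hMt hKeq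
        (Nat.log 2 s + 1) J (Finset.Subset.refl J) hsc
      refine ⟨ps.length, fun ℓ => ps.get ℓ, ?_, ?_, ?_⟩
      · -- length bound
        have hlog2 : (Nat.log 2 s : ℝ) ≤ Real.logb 2 (s : ℝ) := by
          rw [Real.le_logb_iff_rpow_le one_lt_two (by exact_mod_cast hs), Real.rpow_natCast]
          exact_mod_cast Nat.pow_log_le_self 2 (by omega)
        have : (ps.length : ℝ) ≤ (Nat.log 2 s : ℝ) + 1 := by exact_mod_cast hlen
        linarith
      · intro ℓ
        exact hmem _ (ps.get_mem ℓ)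
      · intro k hk
        obtain ⟨p, hp, h⟩ := hcov k hk
        obtain ⟨i, hi⟩ := List.mem_iff_get.mp hp
        refine ⟨i, ?_⟩
        have hi' : (fun ℓ => ps.get ℓ) i = p := hi
        rw [hi']
        exact h
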